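/- Let (H,d) be a Hadamard space and f : H → (−∞,∞] a proper convex lower semicontinuous function which is coercive, i.e. f(x) → ∞ whenever d(x,x₀) → ∞ for some (equivalently any) fixed x₀ ∈ H. Then f attains its minimum on H. -/

import Mathlib

open Filter Topology

/-- A Hadamard space structure on a metric space `H`: a geodesic combination map
`geo x y t = (1-t)x ⊕ ty` satisfying the geodesic axioms and the CAT(0) inequality.
(Completeness is imposed via the `CompleteSpace` instance in the theorems.) -/
structure Hadamard (H : Type*) [MetricSpace H] : Type _ where
  geo : H → H → ℝ → H
  geo_zero : ∀ x y : H, geo x y 0 = x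
  geo_one : ∀ x y : H, geo x y 1 = y
  geo_dist : ∀ x y : H, ∀ s ∈ Set.Icc (0 : ℝ) 1, ∀ t ∈ Set.Icc (0 : ℝ) 1,
    dist (geo x y s) (geo x y t) = |s - t| * dist x y
  cat0 : ∀ z x y : H, ∀ t ∈ Set.Icc (0 : ℝ) 1,
    dist z (geo x y t) ^ 2
      ≤ (1 - t) * dist z x ^ 2 + t * dist z y ^ 2 - t * (1 - t) * dist x y ^ 2

/-- A function `f : H → (-∞,∞]` is (geodesically) convex if along every geodesic
`t ↦ (1-t)x ⊕ ty` it satisfies the convexity inequality. -/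
def GeoConvex {H : Type*} [MetricSpace H] (G : Hadamard H) (f : H → EReal) : Prop :=
  ∀ x y : H, ∀ t ∈ Set.Icc (0 : ℝ) 1,
    f (G.geo x y t) ≤ ((1 - t : ℝ) : EReal) * f x + ((t : ℝ) : EReal) * f y

/-- A proper convex lower semicontinuous coercive function on a Hadamard space
attains its minimum. -/
theorem coercive_convex_lsc_attains_min
    {H : Type*} [MetricSpace H] [CompleteSpace H] (G : Hadamard H)
    (f : H → EReal) (hf_ne_bot : ∀ x : H, f x ≠ ⊥)
    (hproper : ∃ x : H, f x ≠ ⊤)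
    (hconv : GeoConvex G f) (hlsc : LowerSemicontinuous f)
    (x₀ : H)
    (hcoer : ∀ M : ℝ, ∃ R : ℝ, ∀ x : H, R ≤ dist x x₀ → (M : EReal) ≤ f x) :
    ∃ z : H, ∀ x : H, f z ≤ f x := by
  classical
  obtain ⟨xs, hxs⟩ := hproper
  set m : EReal := ⨅ x : H, f x with hm
  have hmtop : m ≠ ⊤ := by
    intro h
    exact hxs (top_le_iff.mp (h ▸ iInf_le f xs))
  -- the level sequence
  set c : ℕ → ℝ := fun n => if m = ⊥ then (-(n : ℝ)) else m.toReal + 1 / (n + 1) with hc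
  have hcanti : Antitone c := by
    intro a b hab
    by_cases h : m = ⊥ <;> simp only [hc, h, if_true, if_false]
    · exact neg_le_neg (Nat.cast_le.mpr hab)
    · have hab' : (a : ℝ) ≤ b := Nat.cast_le.mpr hab
      have : (1 : ℝ) / (b + 1) ≤ 1 / (a + 1) := by
        apply one_div_le_one_div_of_le <;> linarith
      linarith
  have hmc : ∀ n, m < ((c n : ℝ) : EReal) := by
    intro n
    by_cases h : m = ⊥
    · rw [h]; exact bot_lt_iff_ne_bot.mpr (EReal.coe_ne_bot _)
    · have hmr : ((m.toReal : ℝ) : EReal) = m := EReal.coe_toReal hmtop h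
      rw [← hmr, hc]; simp only [h, if_false]
      have : (0:ℝ) < 1 / ((n : ℝ) + 1) := by positivity
      exact_mod_cast (by linarith : m.toReal < m.toReal + 1 / ((n : ℝ) + 1))
  have hSne : ∀ n, ∃ x, f x ≤ ((c n : ℝ) : EReal) := by
    intro n
    obtain ⟨x, hx⟩ := iInf_lt_iff.mp (hm ▸ hmc n)
    exact ⟨x, hx.le⟩
  -- boundedness of sublevel sets
  obtain ⟨R, hR⟩ := hcoer (c 0 + 1)
  have hball : ∀ n x, f x ≤ ((c n : ℝ) : EReal) → dist x₀ x < R := by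
    intro n x hx
    by_contra h
    push_neg at h
    have h1 : ((c 0 + 1 : ℝ) : EReal) ≤ f x := hR x (by rwa [dist_comm])
    have h2 : f x ≤ ((c 0 : ℝ) : EReal) :=
      hx.trans (EReal.coe_le_coe_iff.mpr (hcanti (Nat.zero_le n)))
    have := EReal.coe_le_coe_iff.mp (h1.trans h2)
    linarith
  -- distance infima to sublevel sets
  set D : ℕ → Set ℝ := fun n => (fun x => dist x₀ x) '' {x | f x ≤ ((c n : ℝ) : EReal)} with hD
  have hDne : ∀ n, (D n).Nonempty := by
    intro n; obtain ⟨x, hx⟩ := hSne n; exact ⟨dist x₀ x, x, hx, rfl⟩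
  have hDbdd : ∀ n, BddBelow (D n) := by
    intro n; exact ⟨0, by rintro d ⟨x, -, rfl⟩; exact dist_nonneg⟩
  set r : ℕ → ℝ := fun n => sInf (D n) with hr
  have hrnonneg : ∀ n, 0 ≤ r n := by
    intro n
    apply le_csInf (hDne n)
    rintro d ⟨x, -, rfl⟩; exact dist_nonneg
  have hrmono : Monotone r := by
    intro a b hab
    apply csInf_le_csInf (hDbdd a) (hDne b)
    rintro d ⟨x, hx, rfl⟩
    exact ⟨x, hx.trans (EReal.coe_le_coe_iff.mpr (hcanti hab)), rfl⟩
  have hrR : ∀ n, r n < R := by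
    intro n
    obtain ⟨x, hx⟩ := hSne n
    exact lt_of_le_of_lt (csInf_le (hDbdd n) ⟨x, hx, rfl⟩) (hball n x hx)
  have hrbdd : BddAbove (Set.range r) := ⟨R, by rintro d ⟨n, rfl⟩; exact (hrR n).le⟩
  set rs : ℝ := ⨆ n, r n with hrs
  have hrtend : Tendsto r atTop (𝓝 rs) := tendsto_atTop_ciSup hrmono hrbdd
  have hrlers : ∀ n, r n ≤ rs := fun n => le_ciSup hrbdd n
  have hrsnn : 0 ≤ rs := (hrnonneg 0).trans (hrlers 0)
  -- epsilons
  set ε : ℕ → ℝ := fun n => 1 / ((n : ℝ) + 1) with hε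
  have hεpos : ∀ n, 0 < ε n := fun n => by positivity
  have hεanti : Antitone ε := by
    intro a b hab
    have hab' : (a : ℝ) ≤ b := Nat.cast_le.mpr hab
    show (1:ℝ) / ((b:ℝ) + 1) ≤ 1 / ((a:ℝ) + 1)
    apply one_div_le_one_div_of_le <;> linarith
  have hεtend : Tendsto ε atTop (𝓝 0) := tendsto_one_div_add_atTop_nhds_zero_nat
  -- the minimizing sequence
  have hxch : ∀ n, ∃ x, f x ≤ ((c n : ℝ) : EReal) ∧ dist x₀ x < r n + ε n := by
    intro n
    obtain ⟨d, ⟨x, hx, rfl⟩, hd⟩ :=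
      exists_lt_of_csInf_lt (hDne n) (lt_add_of_pos_right (r n) (hεpos n))
    exact ⟨x, hx, hd⟩
  choose u hu1 hu2 using hxch
  have hufin : ∀ n, ∃ a : ℝ, f (u n) = (a : EReal) := by
    intro n
    have hnt : f (u n) ≠ ⊤ := ne_top_of_le_ne_top (EReal.coe_ne_top _) (hu1 n)
    exact ⟨(f (u n)).toReal, (EReal.coe_toReal hnt (hf_ne_bot _)).symm⟩
  -- cauchy estimate
  have ht2 : (1 / 2 : ℝ) ∈ Set.Icc (0 : ℝ) 1 := by norm_num
  have key : ∀ N n k, N ≤ n → N ≤ k →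
      dist (u n) (u k) ≤ Real.sqrt (4 * (rs + ε N) ^ 2 - 4 * r N ^ 2) := by
    intro N n k hn hk
    set q := G.geo (u n) (u k) (1 / 2) with hq
    obtain ⟨a, ha⟩ := hufin n
    obtain ⟨b, hb⟩ := hufin k
    have ha' : a ≤ c n := EReal.coe_le_coe_iff.mp (ha ▸ hu1 n)
    have hb' : b ≤ c k := EReal.coe_le_coe_iff.mp (hb ▸ hu1 k)
    have hfq : f q ≤ ((c N : ℝ) : EReal) := by
      have := hconv (u n) (u k) (1 / 2) ht2
      rw [ha, hb, ← EReal.coe_mul, ← EReal.coe_mul, ← EReal.coe_add] at this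
      refine this.trans (EReal.coe_le_coe_iff.mpr ?_)
      have h1 : c n ≤ c N := hcanti hn
      have h2 : c k ≤ c N := hcanti hk
      nlinarith
    have hrNq : r N ≤ dist x₀ q := csInf_le (hDbdd N) ⟨q, hfq, rfl⟩
    have hcat := G.cat0 x₀ (u n) (u k) (1 / 2) ht2
    rw [← hq] at hcat
    have hdn : dist x₀ (u n) < rs + ε N :=
      (hu2 n).trans_le (add_le_add (hrlers n) (hεanti hn))
    have hdk : dist x₀ (u k) < rs + ε N :=
      (hu2 k).trans_le (add_le_add (hrlers k) (hεanti hk))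
    have hdn0 : (0 : ℝ) ≤ dist x₀ (u n) := dist_nonneg
    have hdk0 : (0 : ℝ) ≤ dist x₀ (u k) := dist_nonneg
    have hq0 : (0 : ℝ) ≤ dist x₀ q := dist_nonneg
    have hrN0 : (0 : ℝ) ≤ r N := hrnonneg N
    have hsq : dist (u n) (u k) ^ 2 ≤ 4 * (rs + ε N) ^ 2 - 4 * r N ^ 2 := by
      nlinarith [sq_nonneg (dist (u n) (u k))]
    calc dist (u n) (u k) = Real.sqrt (dist (u n) (u k) ^ 2) :=
          (Real.sqrt_sq dist_nonneg).symm
      _ ≤ Real.sqrt (4 * (rs + ε N) ^ 2 - 4 * r N ^ 2) := Real.sqrt_le_sqrt hsq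
  -- cauchy
  have hbtend : Tendsto (fun N => Real.sqrt (4 * (rs + ε N) ^ 2 - 4 * r N ^ 2))
      atTop (𝓝 0) := by
    have h1 : Tendsto (fun N => 4 * (rs + ε N) ^ 2 - 4 * r N ^ 2) atTop
        (𝓝 (4 * (rs + 0) ^ 2 - 4 * rs ^ 2)) :=
      (((tendsto_const_nhds.add hεtend).pow 2).const_mul 4).sub
        ((hrtend.pow 2).const_mul 4)
    have h2 : (4 * (rs + 0) ^ 2 - 4 * rs ^ 2 : ℝ) = 0 := by ring
    rw [h2] at h1
    have := (Real.continuous_sqrt.tendsto 0).comp h1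
    simpa [Function.comp_def] using this
  have hcauchy : CauchySeq u :=
    cauchySeq_of_le_tendsto_0 _ (fun n k N hn hk => key N n k hn hk) hbtend
  obtain ⟨z, hz⟩ := cauchySeq_tendsto_of_complete hcauchy
  -- the limit is below every level
  have hzc : ∀ N, f z ≤ ((c N : ℝ) : EReal) := by
    intro N
    by_contra h
    push_neg at h
    have hev : ∀ᶠ x' in 𝓝 z, ((c N : ℝ) : EReal) < f x' := hlsc z _ h
    have hev2 : ∀ᶠ k in atTop, ((c N : ℝ) : EReal) < f (u k) := hz.eventually hev
    have hev3 : ∀ᶠ k in atTop, f (u k) ≤ ((c N : ℝ) : EReal) :=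
      eventually_atTop.mpr ⟨N, fun k hk =>
        (hu1 k).trans (EReal.coe_le_coe_iff.mpr (hcanti hk))⟩
    obtain ⟨k, h1, h2⟩ := (hev2.and hev3).exists
    exact h1.not_ge h2
  -- conclude
  by_cases hbot : m = ⊥
  · exfalso
    obtain ⟨a, ha⟩ : ∃ a : ℝ, f z = (a : EReal) := by
      have hnt : f z ≠ ⊤ := ne_top_of_le_ne_top (EReal.coe_ne_top _) (hzc 0)
      exact ⟨(f z).toReal, (EReal.coe_toReal hnt (hf_ne_bot _)).symm⟩
    obtain ⟨n, hn⟩ := exists_nat_gt (-a)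
    have := EReal.coe_le_coe_iff.mp (ha ▸ hzc n)
    rw [hc] at this
    simp only [hbot, if_true] at this
    linarith
  · refine ⟨z, fun x => ?_⟩
    have hzm : f z ≤ m := by
      by_contra h
      push_neg at h
      have hmr : ((m.toReal : ℝ) : EReal) = m := EReal.coe_toReal hmtop hbot
      -- find N with c N's coe < f z
      rcases eq_or_ne (f z) ⊤ with hfz | hfz
      · exact (hfz ▸ (hzc 0)).not_gt (EReal.coe_lt_top _)
      · obtain ⟨b, hb⟩ : ∃ b : ℝ, f z = (b : EReal) :=
          ⟨(f z).toReal, (EReal.coe_toReal hfz (hf_ne_bot _)).symm⟩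
        have hmb : m.toReal < b := by
          rw [hb, ← hmr] at h; exact_mod_cast h
        obtain ⟨N, hN⟩ := exists_nat_one_div_lt (by linarith : (0 : ℝ) < b - m.toReal)
        have := EReal.coe_le_coe_iff.mp (hb ▸ hzc N)
        rw [hc] at this
        simp only [hbot, if_false] at this
        linarith
    exact hzm.trans (iInf_le f x)
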